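/- Let L : M_d → M_d be a linear map such that e^{tL} is a unital completely positive map on M_d for every t ≥ 0. Then: (i) every eigenvalue λ of L satisfies Re(λ) ≤ 0; (ii) if λ is an eigenvalue of L with Re(λ) = 0, then the generalized eigenspace of λ equals its eigenspace, i.e. ker((L − λ·id)²) = ker(L − λ·id); (iii) if λ is an eigenvalue of L with Re(λ) < 0, then e^{tL}(X) → 0 as t → ∞ for every X in the generalized eigenspace of L corresponding to λ. -/

import Mathlib

noncomputable section
open scoped Kronecker
open Filter Topology Matrix

/-- `M_d`, the algebra of `d × d` complex matrices. -/
abbrev Md (d : ℕ) := Matrix (Fin d) (Fin d) ℂ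

/-- `Ad_U : X ↦ U* X U` for a unitary `U`. -/
def adU {d : ℕ} (U : Matrix.unitaryGroup (Fin d) ℂ) : Md d →ₗ[ℂ] Md d where
  toFun X := (U : Md d)ᴴ * X * (U : Md d)
  map_add' X Y := by simp [Matrix.mul_add, Matrix.add_mul]
  map_smul' c X := by simp [Matrix.mul_smul, Matrix.smul_mul]

/-- A linear map is completely positive if it has a Kraus decomposition. -/
def IsCP {d : ℕ} (Φ : Md d →ₗ[ℂ] Md d) : Prop :=
  ∃ (n : ℕ) (V : Fin n → Md d), ∀ X, Φ X = ∑ j, (V j)ᴴ * X * (V j)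

def IsUnital {d : ℕ} (Φ : Md d →ₗ[ℂ] Md d) : Prop := Φ 1 = 1

def IsTracePreserving {d : ℕ} (Φ : Md d →ₗ[ℂ] Md d) : Prop :=
  ∀ X, (Φ X).trace = X.trace

def IsHermitianPreserving {d : ℕ} (Φ : Md d →ₗ[ℂ] Md d) : Prop :=
  ∀ X, Φ Xᴴ = (Φ X)ᴴ

/-- A unital quantum channel: CP, unital and trace-preserving. -/
def IsUnitalChannel {d : ℕ} (Φ : Md d →ₗ[ℂ] Md d) : Prop :=
  IsCP Φ ∧ IsUnital Φ ∧ IsTracePreserving Φ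

/-- A mixed unitary channel: a convex combination of unitary conjugations. -/
def IsMixedUnitary {d : ℕ} (Φ : Md d →ₗ[ℂ] Md d) : Prop :=
  ∃ (ℓ : ℕ) (U : Fin ℓ → Matrix.unitaryGroup (Fin d) ℂ) (lam : Fin ℓ → ℝ),
    (∀ j, 0 ≤ lam j) ∧ (∀ j, lam j ≤ 1) ∧ (∑ j, lam j = 1) ∧
    Φ = ∑ j, (lam j : ℂ) • adU (U j)

/-- The Choi matrix `J(Φ) = (1/d) ∑_{i,j} E_{ij} ⊗ Φ(E_{ij})`. -/
def choi {d : ℕ} (Φ : Md d →ₗ[ℂ] Md d) : Matrix (Fin d × Fin d) (Fin d × Fin d) ℂ :=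
  (d : ℂ)⁻¹ • ∑ i : Fin d, ∑ j : Fin d,
    (Matrix.single i j (1 : ℂ)) ⊗ₖ Φ (Matrix.single i j (1 : ℂ))

/-- `⟨Φ, Ψ⟩ = tr(J(Φ)* J(Ψ))`; this is a real number whenever `Φ, Ψ` are
Hermitian-preserving, so we record its real part. -/
def pairRe {d : ℕ} (Φ Ψ : Md d →ₗ[ℂ] Md d) : ℝ := (((choi Φ)ᴴ * choi Ψ).trace).re

/-- The Hilbert–Schmidt (Choi) norm `‖Φ‖₂ = tr(J(Φ)* J(Φ))^{1/2}`. -/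
def hsNorm {d : ℕ} (Φ : Md d →ₗ[ℂ] Md d) : ℝ := Real.sqrt (pairRe Φ Φ)

attribute [local instance] Matrix.normedAddCommGroup Matrix.normedSpace

/-- The exponential `e^{tL}` of a linear map `L` on `M_d`. -/
def expL {d : ℕ} (L : Md d →ₗ[ℂ] Md d) (t : ℝ) : Md d →ₗ[ℂ] Md d :=
  ((@NormedSpace.exp _ _ _ (@NonUnitalSeminormedRing.toIsTopologicalRing _ (@ContinuousLinearMap.toNormedRing ℂ (Md d) _ _ _).toNonUnitalNormedRing.toNonUnitalSeminormedRing) ((t : ℂ) • (LinearMap.toContinuousLinearMap L)) :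
      Md d →L[ℂ] Md d)).toLinearMap

lemma toCLM_pow_apply {d : ℕ} (N : Md d →ₗ[ℂ] Md d) (n : ℕ) (X : Md d) :
    ((LinearMap.toContinuousLinearMap N) ^ n) X = (N ^ n) X := by
  induction n generalizing X with
  | zero => rfl
  | succ n ih =>
    rw [pow_succ, pow_succ]
    simp only [ContinuousLinearMap.mul_apply, Module.End.mul_apply]
    rw [show (LinearMap.toContinuousLinearMap N) X = N X from rfl, ih]

lemma smul_pow_apply {d : ℕ} (c : ℂ) (N : Md d →ₗ[ℂ] Md d) (n : ℕ) (X : Md d) :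
    ((c • N) ^ n) X = c ^ n • ((N ^ n) X) := by
  induction n generalizing X with
  | zero => simp
  | succ n ih =>
    rw [pow_succ (c • N) n, pow_succ N n, Module.End.mul_apply, Module.End.mul_apply,
      LinearMap.smul_apply, _root_.map_smul, ih, smul_smul]
    rw [pow_succ]
    ring_nf

lemma expL_apply_gen {d : ℕ} (L : Md d →ₗ[ℂ] Md d) (lam : ℂ) (m : ℕ) (X : Md d)
    (hX : ((L - lam • (1 : Module.End ℂ (Md d))) ^ m) X = 0) (t : ℝ) :
    expL L t X = ∑ k ∈ Finset.range m,
      (Complex.exp ((t : ℂ) * lam) * ((t : ℂ) ^ k / (k.factorial : ℂ))) •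
        (((L - lam • (1 : Module.End ℂ (Md d))) ^ k) X) := by
  letI i1 : NormedRing (Md d →L[ℂ] Md d) := @ContinuousLinearMap.toNormedRing ℂ (Md d) _ _ _
  letI i2 : NormedAlgebra ℂ (Md d →L[ℂ] Md d) := @ContinuousLinearMap.toNormedAlgebra ℂ (Md d) _ _ _
  haveI i0 : SequentialSpace (Md d) := by exact (inferInstance : SequentialSpace (Fin d → Fin d → ℂ))
  haveI i3 : @CompleteSpace (Md d →L[ℂ] Md d) i1.toUniformSpace := by exact ContinuousLinearMap.instCompleteSpace
  letI i5 : NormedAlgebra ℚ (Md d →L[ℂ] Md d) := NormedAlgebra.restrictScalars ℚ ℂ (Md d →L[ℂ] Md d)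
  letI i4 : IsTopologicalRing (Md d →L[ℂ] Md d) := @NonUnitalSeminormedRing.toIsTopologicalRing _ i1.toNonUnitalNormedRing.toNonUnitalSeminormedRing
  set N : Md d →ₗ[ℂ] Md d := L - lam • (1 : Module.End ℂ (Md d)) with hN
  set N' := LinearMap.toContinuousLinearMap N with hN'
  have hsplit : (t : ℂ) • LinearMap.toContinuousLinearMap L
      = algebraMap ℂ (Md d →L[ℂ] Md d) ((t:ℂ) * lam) + (t : ℂ) • N' := by
    rw [Algebra.algebraMap_eq_smul_one]
    refine ContinuousLinearMap.ext fun Y => ?_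
    simp only [ContinuousLinearMap.add_apply, ContinuousLinearMap.smul_apply,
      ContinuousLinearMap.one_apply, hN', hN, LinearMap.coe_toContinuousLinearMap',
      LinearMap.sub_apply, LinearMap.smul_apply, Module.End.one_apply]
    rw [smul_sub, smul_smul]
    abel
  have hcomm : Commute (algebraMap ℂ (Md d →L[ℂ] Md d) ((t:ℂ)*lam)) ((t:ℂ) • N') :=
    Algebra.commutes _ _
  have hexp : NormedSpace.exp ((t : ℂ) • LinearMap.toContinuousLinearMap L)
      = algebraMap ℂ (Md d →L[ℂ] Md d) (Complex.exp ((t:ℂ)*lam)) * NormedSpace.exp ((t:ℂ) • N') := by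
    rw [hsplit]
    refine (NormedSpace.exp_add_of_commute hcomm).trans ?_
    rw [Complex.exp_eq_exp_ℂ]
    exact congrArg (· * _) (NormedSpace.algebraMap_exp_comm (𝔸 := Md d →L[ℂ] Md d) ((t:ℂ)*lam)).symm
  have hzero : ∀ n, n ∉ Finset.range m → ((n.factorial : ℂ)⁻¹ * (t:ℂ)^n) • ((N ^ n) X) = 0 := by
    intro n hn
    rw [Finset.mem_range, not_lt] at hn
    obtain ⟨k, rfl⟩ := Nat.exists_eq_add_of_le hn
    rw [show N ^ (m + k) = N ^ k * N ^ m from by rw [← pow_add, add_comm],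
      Module.End.mul_apply, hX, map_zero, smul_zero]
  have happly : NormedSpace.exp ((t:ℂ) • N') X
      = ∑ k ∈ Finset.range m, ((k.factorial : ℂ)⁻¹ * (t:ℂ)^k) • ((N ^ k) X) := by
    have hs := NormedSpace.expSeries_summable' (𝕂 := ℂ) ((t:ℂ) • N')
    have h1 : NormedSpace.exp ((t:ℂ) • N') X
        = ∑' n : ℕ, (((n.factorial:ℂ))⁻¹ • ((t:ℂ) • N')^n) X := by
      rw [NormedSpace.exp_eq_tsum ℂ]
      exact ((ContinuousLinearMap.apply ℂ (Md d) X).map_tsum hs)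
    rw [h1]
    have h2 : ∀ n : ℕ, (((n.factorial:ℂ))⁻¹ • ((t:ℂ) • N')^n) X
        = ((n.factorial : ℂ)⁻¹ * (t:ℂ)^n) • ((N ^ n) X) := by
      intro n
      have ht : (t:ℂ) • N' = LinearMap.toContinuousLinearMap ((t:ℂ) • N) :=
        ContinuousLinearMap.ext fun Y => rfl
      rw [ht]
      simp only [ContinuousLinearMap.smul_apply]
      rw [toCLM_pow_apply, smul_pow_apply, smul_smul]
    simp_rw [h2]
    exact tsum_eq_sum hzero
  show (NormedSpace.exp ((t : ℂ) • LinearMap.toContinuousLinearMap L)) X = _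
  rw [hexp]
  simp only [ContinuousLinearMap.mul_apply, Algebra.algebraMap_eq_smul_one,
    ContinuousLinearMap.smul_apply, ContinuousLinearMap.one_apply]
  rw [happly, Finset.smul_sum]
  refine Finset.sum_congr rfl fun k _ => ?_
  rw [smul_smul]
  congr 1
  ring

lemma cp_unital_bound {d : ℕ} (Φ : Md d →ₗ[ℂ] Md d) (hCP : IsCP Φ) (hU : IsUnital Φ)
    (X : Md d) : ‖Φ X‖ ≤ (d : ℝ) * ‖X‖ := by
  obtain ⟨n, V, hV⟩ := hCP
  have hsum : ∑ j, (V j)ᴴ * (V j) = 1 := by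
    have h1 := hV 1
    rw [hU] at h1
    simpa [Matrix.mul_one] using h1.symm
  have hdiag : ∀ a : Fin d, ∑ j, ∑ p, ‖V j p a‖ ^ 2 = 1 := by
    intro a
    have := congrArg (fun M : Md d => (M a a).re) hsum
    simp only [Matrix.sum_apply, Matrix.mul_apply, Matrix.conjTranspose_apply,
      Matrix.one_apply_eq, Complex.one_re] at this
    rw [← this, Complex.re_sum]
    refine Finset.sum_congr rfl fun j _ => ?_
    rw [Complex.re_sum]
    refine Finset.sum_congr rfl fun p _ => ?_
    rw [Complex.star_def, mul_comm, Complex.mul_conj, Complex.ofReal_re,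
      Complex.normSq_eq_norm_sq]
  have c1 : ∀ a : Fin d, ∑ j, ∑ q : Fin d, ∑ p : Fin d, ‖V j p a‖ ^ 2 = (d : ℝ) := by
    intro a
    have e : ∀ j, ∑ q : Fin d, ∑ p : Fin d, ‖V j p a‖ ^ 2
        = (d : ℝ) * ∑ p : Fin d, ‖V j p a‖ ^ 2 := fun j => by
      rw [Finset.sum_const, Finset.card_univ, Fintype.card_fin, nsmul_eq_mul]
    rw [Finset.sum_congr rfl (fun j _ => e j), ← Finset.mul_sum, hdiag a, mul_one]
  have c2 : ∀ b : Fin d, ∑ j, ∑ q : Fin d, ∑ p : Fin d, ‖V j q b‖ ^ 2 = (d : ℝ) := by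
    intro b
    have e : ∀ j, ∑ q : Fin d, ∑ p : Fin d, ‖V j q b‖ ^ 2
        = (d : ℝ) * ∑ q : Fin d, ‖V j q b‖ ^ 2 := fun j => by
      rw [Finset.mul_sum]
      refine Finset.sum_congr rfl fun q _ => ?_
      rw [Finset.sum_const, Finset.card_univ, Fintype.card_fin, nsmul_eq_mul]
    rw [Finset.sum_congr rfl (fun j _ => e j), ← Finset.mul_sum, hdiag b, mul_one]
  rw [Matrix.norm_le_iff (by positivity)]
  intro a b
  have key : ‖(Φ X) a b‖ ≤ (∑ j, ∑ q, ∑ p, ‖V j p a‖ * ‖V j q b‖) * ‖X‖ := by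
    rw [hV]
    have expand : (∑ j, (V j)ᴴ * X * (V j)) a b
        = ∑ j, ∑ q, ∑ p, (starRingEnd ℂ) (V j p a) * X p q * V j q b := by
      rw [Matrix.sum_apply]
      refine Finset.sum_congr rfl fun j _ => ?_
      rw [Matrix.mul_apply]
      refine Finset.sum_congr rfl fun q _ => ?_
      rw [Matrix.mul_apply, Finset.sum_mul]
      refine Finset.sum_congr rfl fun p _ => ?_
      rw [Matrix.conjTranspose_apply]
      rfl
    rw [expand]
    calc ‖∑ j, ∑ q, ∑ p, (starRingEnd ℂ) (V j p a) * X p q * V j q b‖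
        ≤ ∑ j, ∑ q, ∑ p, ‖(starRingEnd ℂ) (V j p a) * X p q * V j q b‖ := by
          refine (norm_sum_le _ _).trans (Finset.sum_le_sum fun j _ => ?_)
          refine (norm_sum_le _ _).trans (Finset.sum_le_sum fun q _ => ?_)
          exact norm_sum_le _ _
      _ ≤ ∑ j, ∑ q, ∑ p, ‖V j p a‖ * ‖V j q b‖ * ‖X‖ := by
          refine Finset.sum_le_sum fun j _ => Finset.sum_le_sum fun q _ =>
            Finset.sum_le_sum fun p _ => ?_
          rw [norm_mul, norm_mul, RCLike.norm_conj]
          have hX : ‖X p q‖ ≤ ‖X‖ := Matrix.norm_entry_le_entrywise_sup_norm X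
          calc ‖V j p a‖ * ‖X p q‖ * ‖V j q b‖
              ≤ ‖V j p a‖ * ‖X‖ * ‖V j q b‖ := by gcongr
            _ = ‖V j p a‖ * ‖V j q b‖ * ‖X‖ := by ring
      _ = (∑ j, ∑ q, ∑ p, ‖V j p a‖ * ‖V j q b‖) * ‖X‖ := by
          simp [Finset.sum_mul]
  refine key.trans ?_
  have hbound : (∑ j, ∑ q : Fin d, ∑ p : Fin d, ‖V j p a‖ * ‖V j q b‖) ≤ (d : ℝ) := by
    calc (∑ j, ∑ q : Fin d, ∑ p : Fin d, ‖V j p a‖ * ‖V j q b‖)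
        ≤ ∑ j, ∑ q : Fin d, ∑ p : Fin d, (‖V j p a‖ ^ 2 / 2 + ‖V j q b‖ ^ 2 / 2) := by
          refine Finset.sum_le_sum fun j _ => Finset.sum_le_sum fun q _ =>
            Finset.sum_le_sum fun p _ => ?_
          nlinarith [sq_nonneg (‖V j p a‖ - ‖V j q b‖)]
      _ = (∑ j, ∑ q : Fin d, ∑ p : Fin d, ‖V j p a‖ ^ 2) / 2
            + (∑ j, ∑ q : Fin d, ∑ p : Fin d, ‖V j q b‖ ^ 2) / 2 := by
          simp only [Finset.sum_add_distrib, ← Finset.sum_div]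
      _ = (d : ℝ) := by rw [c1 a, c2 b]; ring
  have := norm_nonneg X
  nlinarith

lemma norm_cexp_mul (t : ℝ) (lam : ℂ) :
    ‖Complex.exp ((t:ℂ) * lam)‖ = Real.exp (t * lam.re) := by
  rw [Complex.norm_exp]
  congr 1
  simp [Complex.mul_re]

set_option maxHeartbeats 1000000 in
/-- spectral properties of the generator of a semigroup of unital CP maps:
eigenvalues have nonpositive real part; purely imaginary eigenvalues are semisimple;
generalized eigenvectors for eigenvalues with negative real part decay under `e^{tL}`. -/
theorem stmt_6 (d : ℕ) (L : Md d →ₗ[ℂ] Md d)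
    (h : ∀ t : ℝ, 0 ≤ t → IsCP (expL L t) ∧ IsUnital (expL L t)) :
    (∀ lam : ℂ, (∃ X : Md d, X ≠ 0 ∧ L X = lam • X) → lam.re ≤ 0) ∧
    (∀ lam : ℂ, (∃ X : Md d, X ≠ 0 ∧ L X = lam • X) → lam.re = 0 →
      LinearMap.ker ((L - lam • (1 : Module.End ℂ (Md d))) ^ 2) =
        LinearMap.ker (L - lam • (1 : Module.End ℂ (Md d)))) ∧
    (∀ lam : ℂ, (∃ X : Md d, X ≠ 0 ∧ L X = lam • X) → lam.re < 0 →
      ∀ X ∈ LinearMap.ker ((L - lam • (1 : Module.End ℂ (Md d))) ^ (d ^ 2)),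
        Filter.Tendsto (fun t : ℝ => expL L t X) atTop (nhds 0)) := by
  have hbd : ∀ t : ℝ, 0 ≤ t → ∀ Y : Md d, ‖expL L t Y‖ ≤ (d : ℝ) * ‖Y‖ :=
    fun t ht Y => cp_unital_bound _ (h t ht).1 (h t ht).2 Y
  refine ⟨?_, ?_, ?_⟩
  · -- (i)
    rintro lam ⟨X, hX0, hXe⟩
    by_contra hre
    push_neg at hre
    have hNX : ((L - lam • (1 : Module.End ℂ (Md d))) ^ 1) X = 0 := by
      simp [LinearMap.sub_apply, hXe]
    set t : ℝ := Real.log ((d : ℝ) + 1) / lam.re with htdef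
    have ht : 0 ≤ t := div_nonneg (Real.log_nonneg (by norm_num)) hre.le
    have hform := expL_apply_gen L lam 1 X hNX t
    rw [Finset.sum_range_one] at hform
    simp only [pow_zero, Nat.factorial_zero, Nat.cast_one, div_one, mul_one,
      Module.End.one_apply] at hform
    have hnorm := hbd t ht X
    rw [hform, norm_smul, norm_cexp_mul] at hnorm
    have hlog : t * lam.re = Real.log ((d : ℝ) + 1) := by
      rw [htdef, div_mul_cancel₀ _ (ne_of_gt hre)]
    rw [hlog, Real.exp_log (by positivity)] at hnorm
    have hx : 0 < ‖X‖ := norm_pos_iff.mpr hX0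
    nlinarith
  · -- (ii)
    rintro lam ⟨X0, hX00, hX0e⟩ hre0
    apply le_antisymm
    · intro X hX
      rw [LinearMap.mem_ker] at hX ⊢
      by_contra hY0
      set Y := (L - lam • (1 : Module.End ℂ (Md d))) X with hYdef
      have hYpos : 0 < ‖Y‖ := norm_pos_iff.mpr hY0
      set t : ℝ := ((d : ℝ) * ‖X‖ + ‖X‖ + 1) / ‖Y‖ with htdef
      have ht0 : 0 ≤ t := by positivity
      have hform := expL_apply_gen L lam 2 X hX t
      rw [Finset.sum_range_succ, Finset.sum_range_one] at hform
      simp only [pow_zero, pow_one, Nat.factorial_zero, Nat.factorial_one, Nat.cast_one,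
        div_one, mul_one, Module.End.one_apply] at hform
      rw [← hYdef] at hform
      have hnorm := hbd t ht0 X
      rw [hform] at hnorm
      have habs : ‖Complex.exp ((t:ℂ) * lam)‖ = 1 := by
        rw [norm_cexp_mul, hre0, mul_zero, Real.exp_zero]
      have h2 : ‖(Complex.exp ((t:ℂ) * lam) * (t:ℂ)) • Y‖ = t * ‖Y‖ := by
        rw [norm_smul, norm_mul, habs, one_mul, Complex.norm_real,
          Real.norm_eq_abs, abs_of_nonneg ht0]
      have h1 : ‖Complex.exp ((t:ℂ) * lam) • X‖ = ‖X‖ := by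
        rw [norm_smul, habs, one_mul]
      have hge : t * ‖Y‖ - ‖X‖
          ≤ ‖Complex.exp ((t:ℂ) * lam) • X + (Complex.exp ((t:ℂ) * lam) * (t:ℂ)) • Y‖ := by
        have := norm_sub_le
          (Complex.exp ((t:ℂ) * lam) • X + (Complex.exp ((t:ℂ) * lam) * (t:ℂ)) • Y)
          (Complex.exp ((t:ℂ) * lam) • X)
        rw [add_sub_cancel_left, h1, h2] at this
        linarith
      have htY : t * ‖Y‖ = (d : ℝ) * ‖X‖ + ‖X‖ + 1 :=
        div_mul_cancel₀ _ (ne_of_gt hYpos)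
      rw [htY] at hge
      linarith [hge.trans hnorm]
    · intro X hX
      rw [LinearMap.mem_ker] at hX ⊢
      rw [pow_two, Module.End.mul_apply, hX, map_zero]
  · -- (iii)
    rintro lam ⟨X0, hX00, hX0e⟩ hre X hX
    rw [LinearMap.mem_ker] at hX
    refine Tendsto.congr (fun t => (expL_apply_gen L lam (d ^ 2) X hX t).symm) ?_
    have h0 : (0 : Md d) = ∑ k ∈ Finset.range (d ^ 2), (0 : Md d) := by simp
    rw [h0]
    refine tendsto_finset_sum _ fun k _ => ?_
    have hsc : Tendsto (fun t : ℝ =>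
        Complex.exp ((t:ℂ) * lam) * ((t:ℂ) ^ k / (k.factorial : ℂ))) atTop (𝓝 0) := by
      rw [tendsto_zero_iff_norm_tendsto_zero]
      have hposc : (0 : ℝ) < -lam.re := by linarith
      have base := (Real.tendsto_pow_mul_exp_neg_atTop_nhds_zero k).comp
        (tendsto_id.const_mul_atTop hposc)
      have base2 := base.const_mul (((-lam.re)⁻¹) ^ k)
      rw [mul_zero] at base2
      have base3 : Tendsto (fun t : ℝ => t ^ k * Real.exp (lam.re * t)) atTop (𝓝 0) := by
        refine base2.congr fun t => ?_
        show ((-lam.re)⁻¹) ^ k * (((-lam.re) * t) ^ k * Real.exp (-((-lam.re) * t)))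
            = t ^ k * Real.exp (lam.re * t)
        rw [← mul_assoc, ← mul_pow,
          show (-lam.re)⁻¹ * (-lam.re * t) = t from by
            rw [← mul_assoc, inv_mul_cancel₀ (ne_of_gt hposc), one_mul],
          neg_mul, neg_neg]
      have base4 := base3.div_const (k.factorial : ℝ)
      rw [zero_div] at base4
      refine base4.congr' ?_
      filter_upwards [eventually_ge_atTop (0 : ℝ)] with t ht
      rw [norm_mul, norm_cexp_mul, norm_div, norm_pow, Complex.norm_real,
        Real.norm_eq_abs, abs_of_nonneg ht]
      have : ‖((k.factorial : ℕ) : ℂ)‖ = (k.factorial : ℝ) := by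
        simp
      rw [this, mul_comm t lam.re]
      ring
    have hfin := hsc.smul_const (((L - lam • (1 : Module.End ℂ (Md d))) ^ k) X)
    rw [zero_smul] at hfin
    exact hfin
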